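/- Let p : ℕ → ℝ be a sequence with p_i ≥ 1 for all i, and let A_p = { a : ℕ → ℂ : ‖a‖_p := Σ_i |a_i|·p_i < ∞ }, a Banach space with norm ‖·‖_p. Define a product on A_p by (a*b)_k = a_k·b_k + a_k·(Σ_{j>k} b_j) + b_k·(Σ_{j>k} a_j). Then: all the series involved converge absolutely and a*b ∈ A_p for a, b ∈ A_p; the product is ℂ-bilinear, commutative, and associative; e_i * e_j = e_{min(i,j)} for all i, j, where e_i denotes the sequence which is 1 at position i and 0 elsewhere; and ‖a*b‖_p ≤ ‖a‖_p·‖b‖_p for all a, b ∈ A_p. In particular, (A_p, *, ‖·‖_p) is a commutative Banach algebra. -/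

import Mathlib

open Filter Topology

/-- The sum of the tail `Σ_{j > k} a j` of a complex sequence. -/
noncomputable def tailSum (a : ℕ → ℂ) (k : ℕ) : ℂ :=
  ∑' j : ℕ, if k < j then a j else 0

/-- The product `(a*b)_k = a_k b_k + a_k (Σ_{j>k} b_j) + b_k (Σ_{j>k} a_j)`,
the unique continuous bilinear extension of `e_i * e_j = e_{min i j}`. -/
noncomputable def kmul (a b : ℕ → ℂ) : ℕ → ℂ :=
  fun k => a k * b k + a k * tailSum b k + b k * tailSum a k

/-- Membership in the weighted `ℓ¹`-space `A_p`. -/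
def memAp (p : ℕ → ℝ) (a : ℕ → ℂ) : Prop :=
  Summable fun i => ‖a i‖ * p i

/-- The norm `‖a‖_p = Σ_i |a_i| p_i` of `A_p`. -/
noncomputable def pnorm (p : ℕ → ℝ) (a : ℕ → ℂ) : ℝ :=
  ∑' i, ‖a i‖ * p i

/-- The `i`-th unit coordinate sequence. -/
def unitSeq (i : ℕ) : ℕ → ℂ := fun k => if k = i then 1 else 0

section Core
variable {K : Type*} [RCLike K]

lemma tail_summable_of_norm {f : ℕ → K} (hf : Summable fun i => ‖f i‖) (k : ℕ) :
    Summable fun j => if k < j then f j else 0 := by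
  apply Summable.of_norm_bounded hf
  intro j; split <;> simp [norm_nonneg]

lemma tail_norm_le {f : ℕ → K} (hf : Summable fun i => ‖f i‖) (k : ℕ) :
    ‖∑' j, if k < j then f j else 0‖ ≤ ∑' i, ‖f i‖ := by
  have h1 : Summable fun j => ‖if k < j then f j else (0:K)‖ := by
    apply hf.of_nonneg_of_le (fun j => norm_nonneg _)
    intro j; split <;> simp [norm_nonneg]
  calc ‖∑' j, if k < j then f j else 0‖ ≤ ∑' j, ‖if k < j then f j else (0:K)‖ :=
        norm_tsum_le_tsum_norm h1
    _ ≤ ∑' i, ‖f i‖ := by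
        apply Summable.tsum_le_tsum _ h1 hf
        intro j; split <;> simp [norm_nonneg]

lemma summable_mul_diag {f g : ℕ → K} (hf : Summable fun i => ‖f i‖)
    (hg : Summable fun i => ‖g i‖) : Summable fun m => f m * g m := by
  apply Summable.of_norm_bounded (hf.mul_right (∑' i, ‖g i‖))
  intro m
  rw [norm_mul]
  exact mul_le_mul_of_nonneg_left (Summable.le_tsum hg m (fun _ _ => norm_nonneg _)) (norm_nonneg _)

lemma summable_mul_tail {f g : ℕ → K} (hf : Summable fun i => ‖f i‖)
    (hg : Summable fun i => ‖g i‖) :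
    Summable fun m => f m * (∑' j, if m < j then g j else 0) := by
  apply Summable.of_norm_bounded (hf.mul_right (∑' i, ‖g i‖))
  intro m
  rw [norm_mul]
  exact mul_le_mul_of_nonneg_left (tail_norm_le hg m) (norm_nonneg _)

/-- Core identity: the "kmul" of two absolutely summable sequences sums to the
product of the sums. -/
lemma core_tsum_kmul {f g : ℕ → K} (hf : Summable fun i => ‖f i‖)
    (hg : Summable fun i => ‖g i‖) :
    ∑' m, (f m * g m + f m * (∑' j, if m < j then g j else 0)
        + g m * (∑' j, if m < j then f j else 0))
      = (∑' i, f i) * (∑' j, g j) := by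
  have hprod : Summable fun z : ℕ × ℕ => ‖f z.1 * g z.2‖ := hf.mul_norm hg
  set h₁ : ℕ × ℕ → K := fun z => if z.1 ≤ z.2 then f z.1 * g z.2 else 0 with hh₁
  set h₂ : ℕ × ℕ → K := fun z => if z.2 < z.1 then f z.1 * g z.2 else 0 with hh₂
  have hb : ∀ (P : Prop) [Decidable P] (x : K), ‖if P then x else 0‖ ≤ ‖x‖ := by
    intro P _ x; split <;> simp [norm_nonneg]
  have hs₁ : Summable h₁ := .of_norm_bounded hprod fun z => hb _ _
  have hs₂ : Summable h₂ := .of_norm_bounded hprod fun z => hb _ _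
  have hsplit : (fun z : ℕ × ℕ => f z.1 * g z.2) = fun z => h₁ z + h₂ z := by
    funext z
    rw [hh₁, hh₂]
    dsimp only
    rcases lt_or_ge z.2 z.1 with h | h
    · rw [if_neg (by omega), if_pos h, zero_add]
    · rw [if_pos h, if_neg (by omega), add_zero]
  have key : (∑' i, f i) * (∑' j, g j) = ∑' z, h₁ z + ∑' z, h₂ z := by
    rw [tsum_mul_tsum_of_summable_norm hf hg, hsplit, Summable.tsum_add hs₁ hs₂]
  -- evaluate ∑' z, h₁ z
  have e₁ : ∑' z, h₁ z = ∑' m, (f m * g m + f m * (∑' j, if m < j then g j else 0)) := by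
    rw [Summable.tsum_prod' hs₁ (fun b => (hs₁.prod_factor b))]
    congr 1
    funext i
    have : (fun j => h₁ (i, j)) = fun j => f i * (if i ≤ j then g j else 0) := by
      funext j; rw [hh₁]; dsimp only; split <;> simp
    rw [show (∑' j, h₁ (i, j)) = ∑' j, f i * (if i ≤ j then g j else 0) by
      exact tsum_congr fun j => congrFun this j]
    rw [tsum_mul_left]
    have hdec : (fun j => if i ≤ j then g j else 0)
        = fun j => (if j = i then g i else 0) + (if i < j then g j else 0) := by
      funext j
      rcases lt_trichotomy j i with h | h | h
      · rw [if_neg (by omega), if_neg (by omega), if_neg (by omega), add_zero]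
      · subst h; rw [if_pos le_rfl, if_pos rfl, if_neg (by omega), add_zero]
      · rw [if_pos (by omega), if_neg (by omega), if_pos h, zero_add]
    rw [hdec, Summable.tsum_add ((summable_of_ne_finset_zero (s := {i}) (fun j hj => by
          rw [if_neg]; simpa using hj))) (tail_summable_of_norm hg i),
      tsum_ite_eq, mul_add]
  -- evaluate ∑' z, h₂ z
  have e₂ : ∑' z, h₂ z = ∑' m, g m * (∑' j, if m < j then f j else 0) := by
    have hswap : ∑' z, h₂ z = ∑' w : ℕ × ℕ, h₂ (w.2, w.1) := by
      exact ((Equiv.prodComm ℕ ℕ).tsum_eq h₂).symm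
    rw [hswap]
    have hs₂' : Summable fun w : ℕ × ℕ => h₂ (w.2, w.1) :=
      ((Equiv.prodComm ℕ ℕ).summable_iff (f := h₂)).2 hs₂
    rw [Summable.tsum_prod' hs₂' (fun b => hs₂'.prod_factor b)]
    congr 1
    funext j
    have : (fun i => h₂ (i, j)) = fun i => g j * (if j < i then f i else 0) := by
      funext i; rw [hh₂]; dsimp only; split <;> simp [mul_comm]
    rw [show (∑' i, h₂ (i, j)) = ∑' i, g j * (if j < i then f i else 0) by
      exact tsum_congr fun i => congrFun this i]
    rw [tsum_mul_left]
  rw [key, e₁, e₂,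
    Summable.tsum_add ((summable_mul_diag hf hg).add (summable_mul_tail hf hg)) (summable_mul_tail hg hf)]

end Core

lemma trunc_norm_summable {f : ℕ → ℂ} (hf : Summable fun i => ‖f i‖) (k : ℕ) :
    Summable fun j => ‖if k < j then f j else (0:ℂ)‖ := by
  apply hf.of_nonneg_of_le (fun j => norm_nonneg _)
  intro j; split <;> simp [norm_nonneg]

lemma tailSum_kmul {a b : ℕ → ℂ} (ha : Summable fun i => ‖a i‖)
    (hb : Summable fun i => ‖b i‖) (k : ℕ) :
    tailSum (kmul a b) k = tailSum a k * tailSum b k := by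
  set f : ℕ → ℂ := fun j => if k < j then a j else 0 with hfdef
  set g : ℕ → ℂ := fun j => if k < j then b j else 0 with hgdef
  have hfn : Summable fun i => ‖f i‖ := trunc_norm_summable ha k
  have hgn : Summable fun i => ‖g i‖ := trunc_norm_summable hb k
  have heq : (fun m => if k < m then kmul a b m else 0)
      = fun m => f m * g m + f m * (∑' j, if m < j then g j else 0)
        + g m * (∑' j, if m < j then f j else 0) := by
    funext m
    by_cases hm : k < m
    · have hg' : (fun j => if m < j then g j else 0) = fun j => if m < j then b j else 0 := by
        funext j; rw [hgdef]; dsimp only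
        by_cases h : m < j
        · rw [if_pos h, if_pos h, if_pos (by omega)]
        · rw [if_neg h, if_neg h]
      have hf' : (fun j => if m < j then f j else 0) = fun j => if m < j then a j else 0 := by
        funext j; rw [hfdef]; dsimp only
        by_cases h : m < j
        · rw [if_pos h, if_pos h, if_pos (by omega)]
        · rw [if_neg h, if_neg h]
      rw [if_pos hm]
      show kmul a b m = _
      unfold kmul tailSum
      rw [hfdef, hgdef]; dsimp only
      rw [if_pos hm, if_pos hm]
      rw [show (∑' j, if m < j then g j else 0) = ∑' j, if m < j then b j else 0 from
        tsum_congr fun j => congrFun hg' j]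
      rw [show (∑' j, if m < j then f j else 0) = ∑' j, if m < j then a j else 0 from
        tsum_congr fun j => congrFun hf' j]
    · rw [if_neg hm, hfdef, hgdef]; dsimp only
      rw [if_neg hm, if_neg hm]; ring
  unfold tailSum
  rw [show (∑' m, if k < m then kmul a b m else 0)
      = ∑' m, (f m * g m + f m * (∑' j, if m < j then g j else 0)
        + g m * (∑' j, if m < j then f j else 0)) from tsum_congr fun m => congrFun heq m]
  exact core_tsum_kmul hfn hgn


lemma real_trunc_summable {F : ℕ → ℝ} (hF : ∀ i, 0 ≤ F i) (hs : Summable F) (k : ℕ) :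
    Summable fun j => if k < j then F j else 0 := by
  apply hs.of_nonneg_of_le (fun j => by by_cases h : k < j <;> simp [h, hF j])
  intro j; by_cases h : k < j <;> simp [h, hF j]

lemma real_norm_funext {F : ℕ → ℝ} (hF : ∀ i, 0 ≤ F i) : (fun i => ‖F i‖) = F := by
  funext i; exact Real.norm_of_nonneg (hF i)

lemma tailSum_norm_le_trunc {b : ℕ → ℂ} (hb : Summable fun i => ‖b i‖) (k : ℕ) :
    ‖tailSum b k‖ ≤ ∑' j, if k < j then ‖b j‖ else 0 := by
  have h1 := trunc_norm_summable hb k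
  calc ‖tailSum b k‖ ≤ ∑' j, ‖if k < j then b j else (0:ℂ)‖ := norm_tsum_le_tsum_norm h1
    _ = ∑' j, if k < j then ‖b j‖ else 0 := by
        apply tsum_congr; intro j; split <;> simp

/-- For a weight `p` with `p_i ≥ 1`, the weighted `ℓ¹`-space `A_p` with
the product `(a*b)_k = a_k b_k + a_k (Σ_{j>k} b_j) + b_k (Σ_{j>k} a_j)` is a commutative
Banach algebra: all the series involved converge absolutely, `A_p` is closed under the
product, the product is `ℂ`-bilinear, commutative and associative, `e_i * e_j =
e_{min(i,j)}`, and `‖a*b‖_p ≤ ‖a‖_p ‖b‖_p`. -/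
theorem stmt_13 (p : ℕ → ℝ) (hp : ∀ i, 1 ≤ p i) :
    -- absolute convergence of all series involved
    (∀ a : ℕ → ℂ, memAp p a → Summable fun i => ‖a i‖) ∧
    (∀ a : ℕ → ℂ, memAp p a → ∀ k : ℕ, Summable fun j => if k < j then ‖a j‖ else 0) ∧
    -- `A_p` is closed under the product
    (∀ a b : ℕ → ℂ, memAp p a → memAp p b → memAp p (kmul a b)) ∧
    -- `ℂ`-bilinearity
    (∀ a a' b : ℕ → ℂ, memAp p a → memAp p a' → memAp p b →
      kmul (a + a') b = kmul a b + kmul a' b) ∧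
    (∀ (c : ℂ) (a b : ℕ → ℂ), memAp p a → memAp p b → kmul (c • a) b = c • kmul a b) ∧
    (∀ a b b' : ℕ → ℂ, memAp p a → memAp p b → memAp p b' →
      kmul a (b + b') = kmul a b + kmul a b') ∧
    (∀ (c : ℂ) (a b : ℕ → ℂ), memAp p a → memAp p b → kmul a (c • b) = c • kmul a b) ∧
    -- commutativity and associativity
    (∀ a b : ℕ → ℂ, kmul a b = kmul b a) ∧
    (∀ a b c : ℕ → ℂ, memAp p a → memAp p b → memAp p c →
      kmul (kmul a b) c = kmul a (kmul b c)) ∧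
    -- the product of unit coordinate sequences
    (∀ i j : ℕ, kmul (unitSeq i) (unitSeq j) = unitSeq (min i j)) ∧
    -- submultiplicativity of the norm
    (∀ a b : ℕ → ℂ, memAp p a → memAp p b → pnorm p (kmul a b) ≤ pnorm p a * pnorm p b) := by
  -- basic summability facts
  have normSummable : ∀ a : ℕ → ℂ, memAp p a → Summable fun i => ‖a i‖ := by
    intro a ha
    exact ha.of_nonneg_of_le (fun i => norm_nonneg _)
      (fun i => le_mul_of_one_le_right (norm_nonneg _) (hp i))
  have truncSummable : ∀ a : ℕ → ℂ, memAp p a → ∀ k : ℕ,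
      Summable fun j => if k < j then ‖a j‖ else 0 := by
    intro a ha k
    exact real_trunc_summable (fun i => norm_nonneg _) (normSummable a ha) k
  have tailAdd : ∀ a a' : ℕ → ℂ, memAp p a → memAp p a' → ∀ k,
      tailSum (a + a') k = tailSum a k + tailSum a' k := by
    intro a a' ha ha' k
    unfold tailSum
    rw [show (fun j => if k < j then (a + a') j else (0:ℂ))
        = fun j => (if k < j then a j else 0) + (if k < j then a' j else 0) by
      funext j; by_cases h : k < j <;> simp [h]]
    exact Summable.tsum_add (tail_summable_of_norm (normSummable a ha) k)
      (tail_summable_of_norm (normSummable a' ha') k)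
  have tailSmul : ∀ (c : ℂ) (a : ℕ → ℂ) (k : ℕ), tailSum (c • a) k = c * tailSum a k := by
    intro c a k
    unfold tailSum
    rw [show (fun j => if k < j then (c • a) j else (0:ℂ))
        = fun j => c * (if k < j then a j else 0) by
      funext j; by_cases h : k < j <;> simp [h]]
    exact tsum_mul_left
  -- pointwise norm bound
  have pointwise : ∀ a b : ℕ → ℂ, memAp p a → memAp p b → ∀ k,
      ‖kmul a b k‖ * p k ≤ (‖a k‖ * p k) * (‖b k‖ * p k)
        + (‖a k‖ * p k) * (∑' j, if k < j then ‖b j‖ * p j else 0)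
        + (‖b k‖ * p k) * (∑' j, if k < j then ‖a j‖ * p j else 0) := by
    intro a b ha hb k
    have ha1 := normSummable a ha
    have hb1 := normSummable b hb
    have hTa : ‖tailSum a k‖ ≤ ∑' j, if k < j then ‖a j‖ * p j else 0 := by
      refine (tailSum_norm_le_trunc ha1 k).trans (Summable.tsum_le_tsum (fun j => ?_)
        (truncSummable a ha k) (real_trunc_summable (fun i => mul_nonneg (norm_nonneg _)
          (le_trans zero_le_one (hp i))) ha k))
      split
      · exact le_mul_of_one_le_right (norm_nonneg _) (hp j)
      · rfl
    have hTb : ‖tailSum b k‖ ≤ ∑' j, if k < j then ‖b j‖ * p j else 0 := by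
      refine (tailSum_norm_le_trunc hb1 k).trans (Summable.tsum_le_tsum (fun j => ?_)
        (truncSummable b hb k) (real_trunc_summable (fun i => mul_nonneg (norm_nonneg _)
          (le_trans zero_le_one (hp i))) hb k))
      split
      · exact le_mul_of_one_le_right (norm_nonneg _) (hp j)
      · rfl
    have htri : ‖kmul a b k‖ ≤ ‖a k‖ * ‖b k‖ + ‖a k‖ * ‖tailSum b k‖
        + ‖b k‖ * ‖tailSum a k‖ := by
      unfold kmul
      refine (norm_add_le _ _).trans ?_
      gcongr
      · exact (norm_add_le _ _).trans (by rw [norm_mul, norm_mul])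
      · rw [norm_mul]
    have hpk : (1:ℝ) ≤ p k := hp k
    have h0Ta : (0:ℝ) ≤ ‖tailSum a k‖ := norm_nonneg _
    have h0Tb : (0:ℝ) ≤ ‖tailSum b k‖ := norm_nonneg _
    have h0a : (0:ℝ) ≤ ‖a k‖ := norm_nonneg _
    have h0b : (0:ℝ) ≤ ‖b k‖ := norm_nonneg _
    have h0TA : (0:ℝ) ≤ ∑' j, if k < j then ‖a j‖ * p j else 0 :=
      tsum_nonneg fun j => by
        by_cases h : k < j <;> simp only [h, if_true, if_false] <;>
          [exact mul_nonneg (norm_nonneg _) (le_trans zero_le_one (hp j)); rfl]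
    nlinarith [mul_le_mul_of_nonneg_right htri (le_trans zero_le_one hpk),
      mul_nonneg h0a (le_trans zero_le_one hpk), mul_nonneg h0b (le_trans zero_le_one hpk),
      mul_le_mul_of_nonneg_left hTb (mul_nonneg h0a (le_trans zero_le_one hpk)),
      mul_le_mul_of_nonneg_left hTa (mul_nonneg h0b (le_trans zero_le_one hpk)),
      mul_le_mul_of_nonneg_left hpk (mul_nonneg (mul_nonneg h0a (le_trans zero_le_one hpk)) h0b)]
  -- the dominating real sequence and its sum
  have ARnorm : ∀ a : ℕ → ℂ, memAp p a →
      Summable fun i => ‖(‖a i‖ * p i)‖ := by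
    intro a ha
    rwa [real_norm_funext (fun i => mul_nonneg (norm_nonneg _) (le_trans zero_le_one (hp i)))]
  have Rsummable : ∀ a b : ℕ → ℂ, memAp p a → memAp p b →
      Summable fun k => (‖a k‖ * p k) * (‖b k‖ * p k)
        + (‖a k‖ * p k) * (∑' j, if k < j then ‖b j‖ * p j else 0)
        + (‖b k‖ * p k) * (∑' j, if k < j then ‖a j‖ * p j else 0) := by
    intro a b ha hb
    exact ((summable_mul_diag (ARnorm a ha) (ARnorm b hb)).add
      (summable_mul_tail (ARnorm a ha) (ARnorm b hb))).add
      (summable_mul_tail (ARnorm b hb) (ARnorm a ha))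
  have Rsum : ∀ a b : ℕ → ℂ, memAp p a → memAp p b →
      (∑' k, ((‖a k‖ * p k) * (‖b k‖ * p k)
        + (‖a k‖ * p k) * (∑' j, if k < j then ‖b j‖ * p j else 0)
        + (‖b k‖ * p k) * (∑' j, if k < j then ‖a j‖ * p j else 0)))
      = pnorm p a * pnorm p b := by
    intro a b ha hb
    exact core_tsum_kmul (ARnorm a ha) (ARnorm b hb)
  have closed : ∀ a b : ℕ → ℂ, memAp p a → memAp p b → memAp p (kmul a b) := by
    intro a b ha hb
    apply (Rsummable a b ha hb).of_nonneg_of_le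
      (fun k => mul_nonneg (norm_nonneg _) (le_trans zero_le_one (hp k)))
      (pointwise a b ha hb)
  refine ⟨normSummable, truncSummable, closed, ?_, ?_, ?_, ?_, ?_, ?_, ?_, ?_⟩
  · -- additivity in first arg
    intro a a' b ha ha' hb
    funext k
    show kmul (a + a') b k = kmul a b k + kmul a' b k
    unfold kmul
    rw [tailAdd a a' ha ha' k]
    simp only [Pi.add_apply]
    ring
  · -- smul in first arg
    intro c a b ha hb
    funext k
    show kmul (c • a) b k = c * kmul a b k
    unfold kmul
    rw [tailSmul c a k]
    simp only [Pi.smul_apply, smul_eq_mul]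
    ring
  · -- additivity in second arg
    intro a b b' ha hb hb'
    funext k
    show kmul a (b + b') k = kmul a b k + kmul a b' k
    unfold kmul
    rw [tailAdd b b' hb hb' k]
    simp only [Pi.add_apply]
    ring
  · -- smul in second arg
    intro c a b ha hb
    funext k
    show kmul a (c • b) k = c * kmul a b k
    unfold kmul
    rw [tailSmul c b k]
    simp only [Pi.smul_apply, smul_eq_mul]
    ring
  · -- commutativity
    intro a b
    funext k
    unfold kmul
    ring
  · -- associativity
    intro a b c ha hb hc
    have ha1 := normSummable a ha
    have hb1 := normSummable b hb
    have hc1 := normSummable c hc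
    funext k
    show kmul (kmul a b) c k = kmul a (kmul b c) k
    have h1 := tailSum_kmul ha1 hb1 k
    have h2 := tailSum_kmul hb1 hc1 k
    simp only [kmul] at h1 h2 ⊢
    rw [h1, h2]
    ring
  · -- unit sequences
    intro i j
    have htail : ∀ i k : ℕ, tailSum (unitSeq i) k = if k < i then 1 else 0 := by
      intro i k
      unfold tailSum unitSeq
      rw [show (fun j => if k < j then (if j = i then (1:ℂ) else 0) else 0)
          = fun j => if j = i then (if k < i then (1:ℂ) else 0) else 0 by
        funext j
        by_cases h : j = i
        · subst h; simp
        · simp [h]]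
      exact tsum_ite_eq i _
    funext k
    show kmul (unitSeq i) (unitSeq j) k = unitSeq (min i j) k
    unfold kmul
    rw [htail, htail]
    unfold unitSeq
    split_ifs <;> norm_num <;> omega
  · -- norm bound
    intro a b ha hb
    calc pnorm p (kmul a b)
        ≤ ∑' k, ((‖a k‖ * p k) * (‖b k‖ * p k)
          + (‖a k‖ * p k) * (∑' j, if k < j then ‖b j‖ * p j else 0)
          + (‖b k‖ * p k) * (∑' j, if k < j then ‖a j‖ * p j else 0)) := by
          exact Summable.tsum_le_tsum (pointwise a b ha hb) (closed a b ha hb) (Rsummable a b ha hb)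
      _ = pnorm p a * pnorm p b := Rsum a b ha hb
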